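/- For every diagonal matrix ρ = diag(ρ_11,…,ρ_nn) and all n×n matrices X, Y: tr(ρ X L(Y)) − tr(ρ L_B(X) Y) = Σ_{l,m} X_{ll} Y_{mm} ( ρ_{ll}(Γ_{-,ε_l−ε_m} + Γ_{+,ε_m−ε_l}) − ρ_{mm}(Γ_{-,ε_m−ε_l} + Γ_{+,ε_l−ε_m}) ), where X_{ll} and Y_{mm} denote diagonal matrix entries. -/

import Mathlib

open Matrix Finset

/-- `E_ω = |ε_l⟩⟨ε_m|` for the pair `p = (l, m)` with `l < m`:
the matrix whose only nonzero entry is a `1` in position `(l, m)`. -/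
noncomputable def Eof {n : ℕ} (p : Fin n × Fin n) : Matrix (Fin n) (Fin n) ℂ :=
  Matrix.single p.1 p.2 1

/-- The forward generator
`L(X) = i[Δ,X] − Σ_ω ( Γ₋(ω)(½{E_ω†E_ω, X} − E_ω† X E_ω) + Γ₊(ω)(½{E_ωE_ω†, X} − E_ω X E_ω†) )`,
the sum ranging over the Bohr frequencies `ω = ε_m − ε_l` with `m > l`. -/
noncomputable def genL {n : ℕ} (ε : Fin n → ℝ) (Γm Γp : ℝ → ℝ)
    (Δ : Matrix (Fin n) (Fin n) ℂ) (X : Matrix (Fin n) (Fin n) ℂ) :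
    Matrix (Fin n) (Fin n) ℂ :=
  Complex.I • (Δ * X - X * Δ) -
    ∑ p ∈ Finset.univ.filter (fun p : Fin n × Fin n => p.1 < p.2),
      (((Γm (ε p.2 - ε p.1) : ℝ) : ℂ) •
          ((1 / 2 : ℂ) • ((Eof p)ᴴ * Eof p * X + X * ((Eof p)ᴴ * Eof p)) -
            (Eof p)ᴴ * X * Eof p) +
        ((Γp (ε p.2 - ε p.1) : ℝ) : ℂ) •
          ((1 / 2 : ℂ) • (Eof p * (Eof p)ᴴ * X + X * (Eof p * (Eof p)ᴴ)) -
            Eof p * X * (Eof p)ᴴ))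

/-- The backward generator `L_B`, which differs from `L` only by the sign of the
Hamiltonian (commutator) part. -/
noncomputable def genLB {n : ℕ} (ε : Fin n → ℝ) (Γm Γp : ℝ → ℝ)
    (Δ : Matrix (Fin n) (Fin n) ℂ) (X : Matrix (Fin n) (Fin n) ℂ) :
    Matrix (Fin n) (Fin n) ℂ :=
  (-Complex.I) • (Δ * X - X * Δ) -
    ∑ p ∈ Finset.univ.filter (fun p : Fin n × Fin n => p.1 < p.2),
      (((Γm (ε p.2 - ε p.1) : ℝ) : ℂ) •
          ((1 / 2 : ℂ) • ((Eof p)ᴴ * Eof p * X + X * ((Eof p)ᴴ * Eof p)) -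
            (Eof p)ᴴ * X * Eof p) +
        ((Γp (ε p.2 - ε p.1) : ℝ) : ℂ) •
          ((1 / 2 : ℂ) • (Eof p * (Eof p)ᴴ * X + X * (Eof p * (Eof p)ᴴ)) -
            Eof p * X * (Eof p)ᴴ))

/-- For every diagonal matrix `ρ = diag(ρ₁₁,…,ρₙₙ)` and all `n × n` matrices `X`, `Y`:
`tr(ρ X L(Y)) − tr(ρ L_B(X) Y)
  = Σ_{l,m} X_{ll} Y_{mm} ( ρ_{ll}(Γ₋(ε_l−ε_m) + Γ₊(ε_m−ε_l)) − ρ_{mm}(Γ₋(ε_m−ε_l) + Γ₊(ε_l−ε_m)) )`. -/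
lemma conjT_std {n : ℕ} (i j : Fin n) :
    (Matrix.single i j (1:ℂ))ᴴ = Matrix.single j i 1 := by
  ext a b
  simp [conjTranspose_apply, Matrix.single, and_comm]

lemma pairEq {n : ℕ} (l m : Fin n) (a b : ℂ) (r : Fin n → ℂ) (X Y : Matrix (Fin n) (Fin n) ℂ) :
    Matrix.trace (Matrix.diagonal r * X *
        (a • ((1 / 2 : ℂ) • (Matrix.single m l (1:ℂ) * Matrix.single l m 1 * Y +
              Y * (Matrix.single m l (1:ℂ) * Matrix.single l m 1)) -
            Matrix.single m l (1:ℂ) * Y * Matrix.single l m 1) +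
          b • ((1 / 2 : ℂ) • (Matrix.single l m (1:ℂ) * Matrix.single m l 1 * Y +
              Y * (Matrix.single l m (1:ℂ) * Matrix.single m l 1)) -
            Matrix.single l m (1:ℂ) * Y * Matrix.single m l 1))) -
      Matrix.trace (Matrix.diagonal r *
        (a • ((1 / 2 : ℂ) • (Matrix.single m l (1:ℂ) * Matrix.single l m 1 * X +
              X * (Matrix.single m l (1:ℂ) * Matrix.single l m 1)) -
            Matrix.single m l (1:ℂ) * X * Matrix.single l m 1) +
          b • ((1 / 2 : ℂ) • (Matrix.single l m (1:ℂ) * Matrix.single m l 1 * X +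
              X * (Matrix.single l m (1:ℂ) * Matrix.single m l 1)) -
            Matrix.single l m (1:ℂ) * X * Matrix.single m l 1)) * Y) =
    a * (r m * X l l * Y m m - r m * X m m * Y l l) +
      b * (r l * X m m * Y l l - r l * X l l * Y m m) := by
  simp only [Matrix.single_mul_single_same, one_mul, smul_add, smul_sub, Matrix.mul_add,
    Matrix.add_mul, Matrix.mul_sub, Matrix.sub_mul, Matrix.mul_smul, Matrix.smul_mul,
    trace_add, trace_sub, trace_smul, smul_eq_mul]
  simp [Matrix.trace, Matrix.diag, Matrix.mul_apply, Matrix.diagonal, Matrix.single,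
    ite_and, Finset.mul_sum, Finset.sum_ite_eq, Finset.sum_ite_eq']
  ring

lemma hamEq {n : ℕ} (e r : Fin n → ℂ) (X Y : Matrix (Fin n) (Fin n) ℂ) :
    Matrix.trace (Matrix.diagonal r * X *
        (Complex.I • (Matrix.diagonal e * Y - Y * Matrix.diagonal e))) -
      Matrix.trace (Matrix.diagonal r *
        ((-Complex.I) • (Matrix.diagonal e * X - X * Matrix.diagonal e)) * Y) = 0 := by
  simp only [smul_sub, Matrix.mul_sub, Matrix.sub_mul, Matrix.mul_smul, Matrix.smul_mul,
    trace_sub, trace_smul, smul_eq_mul, neg_smul, Matrix.neg_mul, Matrix.mul_neg, trace_neg]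
  simp [Matrix.trace, Matrix.diag, Matrix.mul_apply, Matrix.diagonal,
    ite_and, Finset.mul_sum, Finset.sum_ite_eq, Finset.sum_ite_eq']
  have h1 : (∑ x : Fin n, ∑ i : Fin n, Complex.I * (r x * X x i * (e i * Y i x))) =
      ∑ x : Fin n, ∑ i : Fin n, Complex.I * (r x * (X x i * e i) * Y i x) :=
    Finset.sum_congr rfl fun x _ => Finset.sum_congr rfl fun i _ => by ring
  have h2 : (∑ x : Fin n, ∑ i : Fin n, Complex.I * (r x * X x i * (Y i x * e x))) =
      ∑ x : Fin n, ∑ i : Fin n, Complex.I * (r x * (e x * X x i) * Y i x) :=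
    Finset.sum_congr rfl fun x _ => Finset.sum_congr rfl fun i _ => by ring
  rw [h1, h2]
  ring

lemma sum_split {n : ℕ} (f : Fin n → Fin n → ℂ) (h0 : ∀ l, f l l = 0) :
    (∑ l : Fin n, ∑ m : Fin n, f l m) =
      ∑ p ∈ Finset.univ.filter (fun p : Fin n × Fin n => p.1 < p.2),
        (f p.1 p.2 + f p.2 p.1) := by
  rw [Finset.sum_add_distrib]
  have e1 : (∑ p ∈ Finset.univ.filter (fun p : Fin n × Fin n => p.1 < p.2), f p.1 p.2) =
      ∑ l : Fin n, ∑ m : Fin n, if l < m then f l m else 0 := by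
    rw [Finset.sum_filter, Fintype.sum_prod_type]
  have e2 : (∑ p ∈ Finset.univ.filter (fun p : Fin n × Fin n => p.1 < p.2), f p.2 p.1) =
      ∑ l : Fin n, ∑ m : Fin n, if m < l then f l m else 0 := by
    rw [Finset.sum_filter, Fintype.sum_prod_type, Finset.sum_comm]
  rw [e1, e2, ← Finset.sum_add_distrib]
  refine Finset.sum_congr rfl fun l _ => ?_
  rw [← Finset.sum_add_distrib]
  refine Finset.sum_congr rfl fun m _ => ?_
  rcases lt_trichotomy l m with h | h | h
  · simp [h, lt_asymm h]
  · subst h; simp [h0]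
  · simp [h, lt_asymm h]

theorem trace_genL_sub_trace_genLB {n : ℕ} (ε : Fin n → ℝ) (hε : StrictMono ε)
    (Γm Γp : ℝ → ℝ) (hΓm : ∀ ω, 0 ≤ Γm ω) (hΓp : ∀ ω, 0 ≤ Γp ω)
    (hΓm0 : ∀ ω ≤ (0 : ℝ), Γm ω = 0) (hΓp0 : ∀ ω ≤ (0 : ℝ), Γp ω = 0)
    (d : Fin n → ℝ) (r : Fin n → ℂ) (X Y : Matrix (Fin n) (Fin n) ℂ) :
    Matrix.trace (Matrix.diagonal r * X *
        genL ε Γm Γp (Matrix.diagonal fun l => ((d l : ℝ) : ℂ)) Y) -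
      Matrix.trace (Matrix.diagonal r *
        genLB ε Γm Γp (Matrix.diagonal fun l => ((d l : ℝ) : ℂ)) X * Y) =
    ∑ l : Fin n, ∑ m : Fin n, X l l * Y m m *
      (r l * (((Γm (ε l - ε m) : ℝ) : ℂ) + ((Γp (ε m - ε l) : ℝ) : ℂ)) -
        r m * (((Γm (ε m - ε l) : ℝ) : ℂ) + ((Γp (ε l - ε m) : ℝ) : ℂ))) := by
  classical
  unfold genL genLB Eof
  simp only [conjT_std]
  rw [Matrix.mul_sub, Matrix.mul_sub, Matrix.sub_mul, trace_sub, trace_sub]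
  simp only [Finset.mul_sum, Finset.sum_mul, trace_sum]
  rw [sub_sub_sub_comm, hamEq (fun l => ((d l : ℝ) : ℂ)) r X Y, zero_sub,
    ← Finset.sum_sub_distrib]
  rw [Finset.sum_congr rfl fun p _ =>
    pairEq p.1 p.2 ((Γm (ε p.2 - ε p.1) : ℝ) : ℂ) ((Γp (ε p.2 - ε p.1) : ℝ) : ℂ) r X Y]
  have h0 : ∀ l : Fin n, X l l * Y l l *
      (r l * (((Γm (ε l - ε l) : ℝ) : ℂ) + ((Γp (ε l - ε l) : ℝ) : ℂ)) -
        r l * (((Γm (ε l - ε l) : ℝ) : ℂ) + ((Γp (ε l - ε l) : ℝ) : ℂ))) = 0 := by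
    intro l; ring
  rw [sum_split (fun l m => X l l * Y m m *
      (r l * (((Γm (ε l - ε m) : ℝ) : ℂ) + ((Γp (ε m - ε l) : ℝ) : ℂ)) -
        r m * (((Γm (ε m - ε l) : ℝ) : ℂ) + ((Γp (ε l - ε m) : ℝ) : ℂ)))) h0,
    eq_comm, ← Finset.sum_neg_distrib]
  refine Finset.sum_congr rfl fun p hp => ?_
  have hlt : p.1 < p.2 := (Finset.mem_filter.mp hp).2
  have hle : ε p.1 - ε p.2 ≤ 0 := by linarith [hε hlt]
  rw [hΓm0 _ hle, hΓp0 _ hle]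
  push_cast
  ring
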